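/- The smooth function f : (0,∞) → ℝ given by f(x) = 1/(x(2 + sin x)) has a set of regular values that is not open in ℝ. -/

import Mathlib

open Real

lemma aux_hasDeriv (x : ℝ) :
    HasDerivAt (fun z : ℝ => z * (2 + Real.sin z)) ((2 + Real.sin x) + x * Real.cos x) x := by
  have h1 : HasDerivAt (fun z : ℝ => z) 1 x := hasDerivAt_id x
  have h2 : HasDerivAt (fun z : ℝ => 2 + Real.sin z) (Real.cos x) x :=
    (Real.hasDerivAt_sin x).const_add 2
  have : HasDerivAt (fun z : ℝ => z * (2 + Real.sin z)) (1 * (2 + Real.sin x) + x * Real.cos x) x := h1.mul h2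
  convert this using 1
  ring

lemma aux_deriv_inv (x : ℝ) (hx : x * (2 + Real.sin x) ≠ 0) :
    deriv (fun z : ℝ => (z * (2 + Real.sin z))⁻¹) x
      = -((2 + Real.sin x) + x * Real.cos x) / (x * (2 + Real.sin x))^2 :=
  ((aux_hasDeriv x).inv hx).deriv

lemma sin_pos_two (x : ℝ) : 0 < 2 + Real.sin x := by
  have := Real.neg_one_le_sin x; linarith

/-- The set of regular values of `f(x) = 1/(x(2+sin x))` on `(0,∞)` is not open. -/
theorem stmt_16 :
    ¬ IsOpen {y : ℝ | ∀ x ∈ Set.Ioi (0:ℝ),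
        (x * (2 + Real.sin x))⁻¹ = y →
          deriv (fun z : ℝ => (z * (2 + Real.sin z))⁻¹) x ≠ 0} := by
  intro hopen
  set S := {y : ℝ | ∀ x ∈ Set.Ioi (0:ℝ),
        (x * (2 + Real.sin x))⁻¹ = y →
          deriv (fun z : ℝ => (z * (2 + Real.sin z))⁻¹) x ≠ 0}
  have h0 : (0:ℝ) ∈ S := by
    intro x hx hfx
    exfalso
    have hx0 : 0 < x := hx
    have : 0 < x * (2 + Real.sin x) := mul_pos hx0 (sin_pos_two x)
    rw [inv_eq_zero] at hfx
    linarith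
  obtain ⟨ε, hε, hball⟩ := Metric.isOpen_iff.mp hopen 0 h0
  -- choose n large
  obtain ⟨n, hn⟩ := exists_nat_gt (max 2 (1/ε))
  set a : ℝ := n * (2 * π)
  have hna : (n:ℝ) ≤ a := by
    have : (1:ℝ) ≤ 2 * π := by have := Real.pi_gt_three; linarith
    calc (n:ℝ) = n * 1 := by ring
      _ ≤ n * (2 * π) := by
          apply mul_le_mul_of_nonneg_left this (Nat.cast_nonneg n)
  have ha2 : 2 < a := lt_of_lt_of_le (lt_of_le_of_lt (le_max_left _ _) hn) hna
  have haε : 1/ε < a := lt_of_lt_of_le (lt_of_le_of_lt (le_max_right _ _) hn) hna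
  -- g on [a, a+π]
  set g : ℝ → ℝ := fun z => (2 + Real.sin z) + z * Real.cos z with hg
  have hga : 0 < g a := by
    have hs : Real.sin a = 0 := by
      have := Real.sin_nat_mul_pi (2*n)
      have he : ((2*n : ℕ):ℝ) * π = a := by push_cast [a]; ring
      rwa [he] at this
    have hc : Real.cos a = 1 := by
      simpa [a, mul_comm, mul_assoc, mul_left_comm] using Real.cos_nat_mul_two_pi n
    simp [hg, hs, hc]
    linarith
  have hgb : g (a + π) < 0 := by
    have hs : Real.sin (a + π) = 0 := by
      rw [Real.sin_add_pi]
      have := Real.sin_nat_mul_pi (2*n)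
      have he : ((2*n : ℕ):ℝ) * π = a := by push_cast [a]; ring
      rw [he] at this
      simp [this]
    have hc : Real.cos (a + π) = -1 := by
      rw [Real.cos_add_pi]
      simp
      simpa [a, mul_comm, mul_assoc, mul_left_comm] using Real.cos_nat_mul_two_pi n
    have hπ : 0 < π := Real.pi_pos
    have he : g (a + π) = 2 - (a + π) := by simp only [hg, hs, hc]; ring
    rw [he]; linarith
  have hgc : ContinuousOn g (Set.Icc a (a + π)) := by
    exact ((continuous_const.add Real.continuous_sin).add
      (continuous_id.mul Real.continuous_cos)).continuousOn
  have hmem : (0:ℝ) ∈ Set.Icc (g (a + π)) (g a) := ⟨le_of_lt hgb, le_of_lt hga⟩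
  have hab : a ≤ a + π := by have := Real.pi_pos; linarith
  obtain ⟨x, hxI, hgx⟩ := intermediate_value_Icc' hab hgc hmem
  have hxa : a ≤ x := hxI.1
  have hx0 : 0 < x := lt_of_lt_of_le (by linarith) hxa
  -- f x ∈ ball 0 ε
  have hden : 0 < x * (2 + Real.sin x) := mul_pos hx0 (sin_pos_two x)
  have hfx_pos : 0 < (x * (2 + Real.sin x))⁻¹ := inv_pos.mpr hden
  have hfx_lt : (x * (2 + Real.sin x))⁻¹ < ε := by
    have h1 : x ≤ x * (2 + Real.sin x) := by
      nlinarith [Real.neg_one_le_sin x]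
    have h2 : (x * (2 + Real.sin x))⁻¹ ≤ x⁻¹ :=
      inv_anti₀ hx0 h1
    have h3 : x⁻¹ < ε := by
      rw [inv_lt_comm₀ hx0 hε]
      calc ε⁻¹ = 1/ε := (one_div ε).symm
        _ < a := haε
        _ ≤ x := hxa
    linarith
  have hmemS : (x * (2 + Real.sin x))⁻¹ ∈ S := by
    apply hball
    rw [Metric.mem_ball, Real.dist_eq, sub_zero, abs_of_pos hfx_pos]
    exact hfx_lt
  have := hmemS x hx0 rfl
  apply this
  rw [aux_deriv_inv x (ne_of_gt hden)]
  have : (2 + Real.sin x) + x * Real.cos x = 0 := by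
    have := hgx; simpa [hg] using this
  rw [this]
  simp
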